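/- Define polynomials p_{i,s} for the cycle C_n by p_{i,1} = 1, p_{i,s} = det(L(P_i^{s-1},X)) for s ≥ 2 (the generalized-Laplacian determinant of the induced path on vertices v_i,…,v_{i+s−2}, indices mod n), extended by p_{i,s} = −p_{i+s,−s} for s ≤ 0, and let q_{i,j} (i ≤ j) be ± the minor of L(C_n,X) obtained by deleting row i and column j, normalized to have leading coefficient 1. Then q_{i,j} = p_{i+1,j−i} + p_{j+1,n−j+i}; moreover for 2 ≤ j ≤ n−1 and −j ≤ s ≤ n−j the recurrence q_{i,i+j+s} = p_{i+j,s+1}·q_{i,i+j} − p_{i+j+1,s}·q_{i,i+j−1} holds. -/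

import Mathlib

open MvPolynomial Matrix
open Fin.CommRing

/-- Determinant of the generalized Laplacian of the induced path on `t` consecutive vertices
`v_i, v_{i+1}, …, v_{i+t-1}` of the cycle `C_n` (indices mod `n`). -/
noncomputable def cpathDet (P : Type) [CommRing P] (n : ℕ) [NeZero n] (i : Fin n) (t : ℕ) :
    MvPolynomial (Fin n) P :=
  (Matrix.of fun a b : Fin t =>
    if a = b then X (i + ((a : ℕ) : Fin n))
    else if (a : ℕ) + 1 = b ∨ (b : ℕ) + 1 = a then (-1 : MvPolynomial (Fin n) P) else 0).det

/-- `p_{i,s}` for `s ∈ ℕ`: `p_{i,0} = 0`, `p_{i,1} = 1`, and for `s ≥ 2` the determinant of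
the generalized Laplacian of the path on the `s - 1` vertices `v_i, …, v_{i+s-2}`. -/
noncomputable def pN (P : Type) [CommRing P] (n : ℕ) [NeZero n] (i : Fin n) (s : ℕ) :
    MvPolynomial (Fin n) P :=
  if s = 0 then 0 else cpathDet P n i (s - 1)

/-- `p_{i,s}` extended to `s ∈ ℤ` by the convention `p_{i,s} = -p_{i+s,-s}` for `s ≤ 0`. -/
noncomputable def pZ (P : Type) [CommRing P] (n : ℕ) [NeZero n] (i : Fin n) (s : ℤ) :
    MvPolynomial (Fin n) P :=
  if 0 ≤ s then pN P n i s.toNat else - pN P n (i + (s : Fin n)) (-s).toNat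

/-- `q_{a,b} = p_{a+1,b-a} + p_{b+1,n-b+a}` (indices mod `n`): the normalized
`(n-1)`-minor of `L(C_n,X)` obtained by deleting row `a` and column `b`. -/
noncomputable def qq (P : Type) [CommRing P] (n : ℕ) [NeZero n] (a b : Fin n) :
    MvPolynomial (Fin n) P :=
  pN P n (a + 1) ((b - a) : Fin n).val + pN P n (b + 1) (n - ((b - a) : Fin n).val)

/-- The generalized Laplacian of the cycle `C_n`. -/
noncomputable def LCn (P : Type) [CommRing P] (n : ℕ) [NeZero n] :
    Matrix (Fin n) (Fin n) (MvPolynomial (Fin n) P) :=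
  Matrix.of fun u v => if u = v then X u
    else if v = u + 1 ∨ u = v + 1 then (-1 : MvPolynomial (Fin n) P) else 0

/-- The minor of `L(C_n,X)` obtained by deleting row `a` and column `b` (rows and columns
listed in increasing order). -/
noncomputable def cminor (P : Type) [CommRing P] (n : ℕ) [NeZero n] (a b : Fin n) :
    MvPolynomial (Fin n) P :=
  ((LCn P n).submatrix
    (⇑((Finset.univ.erase a).orderEmbOfFin (k := n - 1) (by simp)))
    (⇑((Finset.univ.erase b).orderEmbOfFin (k := n - 1) (by simp)))).det

open MvPolynomial Matrix

namespace CycAux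

variable (P : Type) [CommRing P] (n : ℕ) [NeZero n]

/-- entry function, indexed by naturals -/
noncomputable def Ent (i : Fin n) (a b : ℕ) : MvPolynomial (Fin n) P :=
  if a = b then X (i + (a : Fin n))
  else if a + 1 = b ∨ b + 1 = a then (-1 : MvPolynomial (Fin n) P) else 0

noncomputable def pmat (i : Fin n) (t : ℕ) : Matrix (Fin t) (Fin t) (MvPolynomial (Fin n) P) :=
  Matrix.of fun a b : Fin t => Ent P n i a b

variable {P n}

theorem cpathDet_eq (i : Fin n) (t : ℕ) : cpathDet P n i t = (pmat P n i t).det := by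
  unfold cpathDet pmat
  congr 1
  ext a b
  rcases eq_or_ne a b with h | h
  · subst h; simp [Ent]
  · have h' : (a : ℕ) ≠ (b : ℕ) := fun hc => h (Fin.ext hc)
    simp [Ent, h, h']

theorem Ent_succ (i : Fin n) (a b : ℕ) : Ent P n i (a+1) (b+1) = Ent P n (i+1) a b := by
  unfold Ent
  by_cases h : a = b
  · subst h
    rw [if_pos rfl, if_pos rfl]
    congr 1
    push_cast
    ring
  · rw [if_neg (by omega), if_neg h]
    by_cases h2 : a + 1 = b ∨ b + 1 = a
    · rw [if_pos (by omega), if_pos h2]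
    · rw [if_neg (by omega), if_neg h2]

theorem cpathDet_zero (i : Fin n) : cpathDet P n i 0 = 1 := by
  rw [cpathDet_eq]; exact Matrix.det_fin_zero

theorem cpathDet_one (i : Fin n) : cpathDet P n i 1 = X i := by
  rw [cpathDet_eq, Matrix.det_fin_one]
  simp [pmat, Ent]

end CycAux

open MvPolynomial Matrix
namespace CycAux
variable {P : Type} [CommRing P] {n : ℕ} [NeZero n]

theorem pmat_apply (i : Fin n) (t : ℕ) (a b : Fin t) :
    pmat P n i t a b = Ent P n i a b := rfl

theorem Ent_diag (i : Fin n) (a : ℕ) : Ent P n i a a = X (i + (a : Fin n)) := by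
  unfold Ent; rw [if_pos rfl]

theorem Ent_lo (i : Fin n) (a b : ℕ) (h : b + 1 = a) : Ent P n i a b = -1 := by
  unfold Ent; rw [if_neg (by omega), if_pos (Or.inr h)]

theorem Ent_hi (i : Fin n) (a b : ℕ) (h : a + 1 = b) : Ent P n i a b = -1 := by
  unfold Ent; rw [if_neg (by omega), if_pos (Or.inl h)]

theorem Ent_zero (i : Fin n) (a b : ℕ) (h1 : a ≠ b) (h2 : a + 1 ≠ b) (h3 : b + 1 ≠ a) :
    Ent P n i a b = 0 := by
  unfold Ent; rw [if_neg h1, if_neg (by tauto)]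

theorem pmat_sub_last (i : Fin n) (t : ℕ) :
    (pmat P n i (t+1)).submatrix (Fin.last t).succAbove (Fin.last t).succAbove
      = pmat P n i t := by
  ext a b
  simp only [Matrix.submatrix_apply, Fin.succAbove_last, pmat_apply, Fin.coe_castSucc]

theorem cpathDet_rec (i : Fin n) (t : ℕ) :
    cpathDet P n i (t+2)
      = X (i + ((t+1 : ℕ) : Fin n)) * cpathDet P n i (t+1) - cpathDet P n i t := by
  rw [cpathDet_eq]
  rw [Matrix.det_succ_row _ (Fin.last (t+1))]
  have hne : (Fin.last t).castSucc ≠ Fin.last (t+1) := by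
    intro h; have := congrArg Fin.val h; simp at this
  rw [← Finset.sum_subset (Finset.subset_univ {(Fin.last t).castSucc, Fin.last (t+1)}) ?hz]
  case hz =>
    intro j _ hj
    simp only [Finset.mem_insert, Finset.mem_singleton] at hj
    push_neg at hj
    obtain ⟨hj1, hj2⟩ := hj
    have v1 : (j : ℕ) ≠ t := fun hc => hj1 (Fin.ext (by simpa using hc))
    have v2 : (j : ℕ) ≠ t + 1 := fun hc => hj2 (Fin.ext (by simpa using hc))
    have : pmat P n i (t+2) (Fin.last (t+1)) j = 0 := by
      rw [pmat_apply, Fin.val_last]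
      exact Ent_zero _ _ _ (by omega) (by omega) (by omega)
    rw [this]; ring
  rw [Finset.sum_pair hne]
  -- entry values
  have e1 : pmat P n i (t+2) (Fin.last (t+1)) ((Fin.last t).castSucc) = -1 := by
    rw [pmat_apply, Fin.val_last, Fin.coe_castSucc, Fin.val_last]
    exact Ent_lo _ _ _ rfl
  have e2 : pmat P n i (t+2) (Fin.last (t+1)) (Fin.last (t+1))
      = X (i + ((t+1 : ℕ) : Fin n)) := by
    rw [pmat_apply, Fin.val_last]; exact Ent_diag _ _
  -- the secondary minor
  have e3 : (((pmat P n i (t+2)).submatrix (Fin.last (t+1)).succAbove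
      ((Fin.last t).castSucc).succAbove)).det = - cpathDet P n i t := by
    set B := ((pmat P n i (t+2)).submatrix (Fin.last (t+1)).succAbove
      ((Fin.last t).castSucc).succAbove) with hB
    have hcol : ∀ r : Fin (t+1), B r (Fin.last t) = Ent P n i r (t+1) := by
      intro r
      rw [hB]
      simp only [Matrix.submatrix_apply, Fin.succAbove_last]
      rw [Fin.succAbove_of_le_castSucc _ _ (le_refl _), pmat_apply]
      simp only [Fin.coe_castSucc, Fin.val_succ, Fin.val_last]
    rw [Matrix.det_succ_column _ (Fin.last t)]
    rw [Finset.sum_eq_single (Fin.last t)]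
    · have c1 : B (Fin.last t) (Fin.last t) = -1 := by
        rw [hcol, Fin.val_last]; exact Ent_hi _ _ _ rfl
      have c2 : (B.submatrix (Fin.last t).succAbove (Fin.last t).succAbove)
          = pmat P n i t := by
        ext a b
        rw [hB]
        simp only [Matrix.submatrix_apply, Fin.succAbove_last]
        rw [Fin.succAbove_of_castSucc_lt _ _ (by rw [Fin.lt_def]; simp [Fin.is_lt]),
          pmat_apply, pmat_apply]
        simp only [Fin.coe_castSucc]
      rw [c1, c2, ← cpathDet_eq, Fin.val_last]
      rw [Even.neg_one_pow ⟨t, rfl⟩]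
      ring
    · intro r _ hr
      have v1 : (r : ℕ) ≠ t := fun hc => hr (Fin.ext (by simpa using hc))
      rw [hcol, Ent_zero _ _ _ (by omega) (by omega) (by omega)]
      ring
    · intro h; exact absurd (Finset.mem_univ _) h
  rw [e1, e2, e3, pmat_sub_last, ← cpathDet_eq]
  simp only [Fin.val_last, Fin.coe_castSucc]
  rw [show t + 1 + t = 2*t+1 from by ring, Odd.neg_one_pow ⟨t, by ring⟩,
    Even.neg_one_pow ⟨t+1, by ring⟩]
  ring
end CycAux

open MvPolynomial Matrix
namespace CycAux
variable {P : Type} [CommRing P] {n : ℕ} [NeZero n]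

theorem pmat_sub_succ (i : Fin n) (t : ℕ) :
    (pmat P n i (t+1)).submatrix Fin.succ Fin.succ = pmat P n (i+1) t := by
  ext a b
  simp only [Matrix.submatrix_apply, pmat_apply, Fin.val_succ]
  rw [Ent_succ]

theorem cpathDet_rec' (i : Fin n) (t : ℕ) :
    cpathDet P n i (t+2)
      = X i * cpathDet P n (i+1) (t+1) - cpathDet P n (i+1+1) t := by
  rw [cpathDet_eq]
  rw [Matrix.det_succ_row_zero]
  have hne : (0 : Fin (t+2)) ≠ 1 := by
    intro h; have := congrArg Fin.val h; simp at this
  rw [← Finset.sum_subset (Finset.subset_univ {(0 : Fin (t+2)), 1}) ?hz]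
  case hz =>
    intro j _ hj
    simp only [Finset.mem_insert, Finset.mem_singleton] at hj
    push_neg at hj
    obtain ⟨hj1, hj2⟩ := hj
    have v1 : (j : ℕ) ≠ 0 := fun hc => hj1 (Fin.ext (by simpa using hc))
    have v2 : (j : ℕ) ≠ 1 := by
      intro hc
      apply hj2
      apply Fin.ext
      rw [hc, Fin.val_one]
    have : pmat P n i (t+2) 0 j = 0 := by
      rw [pmat_apply, Fin.val_zero]
      exact Ent_zero _ _ _ (by omega) (by omega) (by omega)
    rw [this]; ring
  rw [Finset.sum_pair hne]
  have e1 : pmat P n i (t+2) 0 0 = X i := by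
    rw [pmat_apply, Fin.val_zero, Ent_diag]
    norm_num
  have e2 : pmat P n i (t+2) 0 1 = -1 := by
    rw [pmat_apply, Fin.val_zero, Fin.val_one]
    exact Ent_hi _ _ _ rfl
  have e3 : ((pmat P n i (t+2)).submatrix Fin.succ (0 : Fin (t+2)).succAbove).det
      = cpathDet P n (i+1) (t+1) := by
    rw [Fin.succAbove_zero, pmat_sub_succ, ← cpathDet_eq]
  have e4 : ((pmat P n i (t+2)).submatrix Fin.succ (1 : Fin (t+2)).succAbove).det
      = - cpathDet P n (i+1+1) t := by
    set B := (pmat P n i (t+2)).submatrix Fin.succ (1 : Fin (t+2)).succAbove with hB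
    rw [Matrix.det_succ_column_zero]
    have hcol : ∀ r : Fin (t+1), B r 0 = Ent P n i (r+1) 0 := by
      intro r
      rw [hB]
      simp only [Matrix.submatrix_apply]
      have h0 : (1 : Fin (t+2)).succAbove 0 = 0 := by
        rw [Fin.succAbove_of_castSucc_lt]
        · rfl
        · rw [Fin.lt_def]; simp
      rw [h0, pmat_apply, Fin.val_succ, Fin.val_zero]
    rw [Finset.sum_eq_single (0 : Fin (t+1))]
    · have c1 : B 0 0 = -1 := by
        rw [hcol, Fin.val_zero]
        exact Ent_lo _ _ _ rfl
      have c2 : (B.submatrix (0 : Fin (t+1)).succAbove Fin.succ)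
          = pmat P n (i+1+1) t := by
        refine Matrix.ext fun a b => ?_
        rw [hB]
        simp only [Matrix.submatrix_apply, Fin.succAbove_zero]
        have hsa : (1 : Fin (t+2)).succAbove b.succ = b.succ.succ := by
          rw [Fin.succAbove_of_le_castSucc]
          rw [Fin.le_def]
          simp
        rw [hsa, pmat_apply, pmat_apply]
        simp only [Fin.val_succ]
        rw [Ent_succ, Ent_succ]
      rw [c1, c2, ← cpathDet_eq, Fin.val_zero, pow_zero]
      ring
    · intro r _ hr
      have v1 : (r : ℕ) ≠ 0 := fun hc => hr (Fin.ext (by simpa using hc))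
      rw [hcol, Ent_zero _ _ _ (by omega) (by omega) (by omega)]
      ring
    · intro h; exact absurd (Finset.mem_univ _) h
  rw [e1, e2, e3, e4, Fin.val_zero, Fin.val_one, pow_zero, pow_one]
  ring
end CycAux

open MvPolynomial Matrix
namespace CycAux
variable {P : Type} [CommRing P] {n : ℕ} [NeZero n]

theorem pN_zero (i : Fin n) : pN P n i 0 = 0 := by simp [pN]

theorem pN_one (i : Fin n) : pN P n i 1 = 1 := by
  simp [pN, cpathDet_zero]

theorem pN_two (i : Fin n) : pN P n i 2 = X i := by
  simp [pN, cpathDet_one]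

theorem pN_succ (i : Fin n) (s : ℕ) : pN P n i (s+1) = cpathDet P n i s := by simp [pN]

theorem pN_rec (i : Fin n) (s : ℕ) :
    pN P n i (s+2) = X (i + (s : Fin n)) * pN P n i (s+1) - pN P n i s := by
  cases s with
  | zero => simp [pN_two, pN_one, pN_zero]
  | succ t =>
      rw [pN_succ, pN_succ, pN_succ, cpathDet_rec]

theorem pN_rec' (i : Fin n) (s : ℕ) :
    pN P n i (s+2) = X i * pN P n (i+1) (s+1) - pN P n (i+1+1) s := by
  cases s with
  | zero => simp [pN_two, pN_one, pN_zero]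
  | succ t =>
      rw [pN_succ, pN_succ, pN_succ, cpathDet_rec']

theorem pN_split (i : Fin n) (a : ℕ) : ∀ b : ℕ,
    pN P n i (a+b+1) = pN P n i (a+1) * pN P n (i + (a : Fin n)) (b+1)
      - pN P n i a * pN P n (i + (a : Fin n) + 1) b := by
  intro b
  induction b using Nat.twoStepInduction with
  | zero => simp [pN_one, pN_zero]
  | one =>
      rw [pN_two, pN_one, show a + 1 + 1 = a + 2 from rfl, pN_rec]
      ring
  | more b ih1 ih2 =>
      have hx1 : i + ((a + b + 1 : ℕ) : Fin n) = (i + (a : Fin n)) + ((b+1 : ℕ) : Fin n) := by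
        push_cast; ring
      have hx2 : i + ((a + b + 1 : ℕ) : Fin n) = (i + (a : Fin n) + 1) + ((b : ℕ) : Fin n) := by
        have hb : ((b + 1 : ℕ) : Fin n) = (b : Fin n) + 1 := by push_cast; ring
        rw [hx1, hb]; ring
      have e1 : pN P n i (a + (b+2) + 1) = X (i + ((a + b + 1: ℕ) : Fin n)) *
          pN P n i (a + (b+1) + 1) - pN P n i (a + b + 1) := by
        rw [show a + (b+2) + 1 = (a+b+1) + 2 from by ring, pN_rec,
          show a + b + 1 + 1 = a + (b+1) + 1 from by ring]
      have e2 : pN P n (i + (a : Fin n)) (b+3) = X (i + ((a + b + 1: ℕ) : Fin n)) *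
          pN P n (i + (a : Fin n)) (b+2) - pN P n (i + (a : Fin n)) (b+1) := by
        rw [show b + 3 = (b+1) + 2 from by ring, pN_rec, hx1]
      have e3 : pN P n (i + (a : Fin n) + 1) (b+2) = X (i + ((a + b + 1: ℕ) : Fin n)) *
          pN P n (i + (a : Fin n) + 1) (b+1) - pN P n (i + (a : Fin n) + 1) b := by
        rw [pN_rec, hx2]
      rw [e1, e2, e3, ih1, ih2]
      ring

theorem pN_det1 (i : Fin n) (s : ℕ) :
    pN P n i (s+1) * pN P n (i+1) (s+1) - pN P n i (s+2) * pN P n (i+1) s = 1 := by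
  induction s with
  | zero => simp [pN_one, pN_zero]
  | succ s ih =>
      have hx : (i+1) + (s : Fin n) = i + ((s+1 : ℕ) : Fin n) := by push_cast; ring
      have e1 : pN P n (i+1) (s+2) = X (i + ((s+1 : ℕ) : Fin n)) * pN P n (i+1) (s+1)
          - pN P n (i+1) s := by rw [pN_rec, hx]
      have e2 : pN P n i (s+3) = X (i + ((s+1 : ℕ) : Fin n)) * pN P n i (s+2)
          - pN P n i (s+1) := by rw [show s+3 = (s+1)+2 from rfl, pN_rec]
      rw [show s+1+1 = s+2 from rfl, show s+2+1 = s+3 from rfl, e1, e2]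
      linear_combination ih

theorem pZ_ofNat (i : Fin n) (s : ℕ) : pZ P n i (s : ℤ) = pN P n i s := by
  simp [pZ]

theorem pZ_zero (i : Fin n) : pZ P n i 0 = 0 := by
  rw [pZ, if_pos le_rfl, Int.toNat_zero, pN_zero]

theorem pZ_one (i : Fin n) : pZ P n i 1 = 1 := by
  rw [pZ, if_pos (by norm_num), Int.toNat_one, pN_one]

theorem pZ_two (i : Fin n) : pZ P n i 2 = X i := by
  rw [pZ, if_pos (by norm_num), show (2:ℤ).toNat = 2 from rfl, pN_two]

theorem pZ_neg (i : Fin n) (s : ℕ) : pZ P n i (-(s : ℤ)) = - pN P n (i - (s : Fin n)) s := by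
  cases s with
  | zero => simp [pZ_zero, pN_zero]
  | succ t =>
      have h : ¬ (0 : ℤ) ≤ -((t+1 : ℕ) : ℤ) := by omega
      rw [pZ, if_neg h]
      have h2 : (-(-((t+1:ℕ):ℤ))).toNat = t+1 := by omega
      have h3 : i + ((-((t+1:ℕ):ℤ) : ℤ) : Fin n) = i - ((t+1:ℕ) : Fin n) := by push_cast; ring
      rw [h2, h3]

theorem pZ_rec (i : Fin n) (s : ℤ) :
    pZ P n i (s+2) = X (i + (s : Fin n)) * pZ P n i (s+1) - pZ P n i s := by
  obtain ⟨m, rfl | rfl⟩ := Int.eq_nat_or_neg s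
  · have h1 : ((m : ℤ) + 2) = ((m + 2 : ℕ) : ℤ) := by push_cast; ring
    have h2 : ((m : ℤ) + 1) = ((m + 1 : ℕ) : ℤ) := by push_cast; ring
    rw [h1, h2, pZ_ofNat, pZ_ofNat, pZ_ofNat, pN_rec]
    norm_cast
  · match m with
    | 0 =>
        rw [show (-((0:ℕ):ℤ) + 2 : ℤ) = 2 from by norm_num,
          show (-((0:ℕ):ℤ) + 1 : ℤ) = 1 from by norm_num,
          show (-((0:ℕ):ℤ) : ℤ) = 0 from by norm_num,
          pZ_zero, pZ_one, pZ_two]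
        simp
    | 1 =>
        rw [show (-((1:ℕ):ℤ) + 2 : ℤ) = 1 from by norm_num,
          show (-((1:ℕ):ℤ) + 1 : ℤ) = 0 from by norm_num,
          pZ_one, pZ_zero, pZ_neg, pN_one]
        ring
    | 2 =>
        rw [show (-((2:ℕ):ℤ) + 2 : ℤ) = 0 from by norm_num,
          show (-((2:ℕ):ℤ) + 1 : ℤ) = -((1:ℕ):ℤ) from by norm_num,
          pZ_zero, pZ_neg, pZ_neg, pN_one, pN_two]
        rw [show i + ((-((2:ℕ):ℤ) : ℤ) : Fin n) = i - ((2:ℕ) : Fin n) from by push_cast; ring]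
        ring
    | (u+3) =>
        rw [show (-((u+3:ℕ):ℤ) + 2 : ℤ) = -((u+1:ℕ) : ℤ) from by push_cast; ring,
          show (-((u+3:ℕ):ℤ) + 1 : ℤ) = -((u+2:ℕ) : ℤ) from by push_cast; ring,
          pZ_neg, pZ_neg, pZ_neg]
        rw [show i + ((-((u+3:ℕ):ℤ) : ℤ) : Fin n) = i - ((u+3:ℕ) : Fin n) from by
          push_cast; ring]
        have e := pN_rec' (P := P) (n := n) (i := i - ((u+3:ℕ) : Fin n)) (s := u+1)
        have h1 : i - ((u+3:ℕ) : Fin n) + 1 = i - ((u+2:ℕ) : Fin n) := by push_cast; ring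
        have h2 : i - ((u+3:ℕ) : Fin n) + 1 + 1 = i - ((u+1:ℕ) : Fin n) := by push_cast; ring
        rw [h2, h1, show u+1+1 = u+2 from rfl, show u+1+2 = u+3 from rfl] at e
        rw [e]
        ring

end CycAux

open MvPolynomial Matrix
namespace CycAux
variable (P : Type) [CommRing P] (n : ℕ) [NeZero n]

noncomputable def Qp (i : Fin n) (k : ℕ) : MvPolynomial (Fin n) P :=
  pN P n (i+1) k + pN P n (i + (k : Fin n) + 1) (n - k)

noncomputable def C2 (i : Fin n) (j : ℕ) (s : ℤ) : Prop :=
  Qp P n i (((j:ℤ) + s).toNat)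
    = pZ P n (i + (j:Fin n)) (s+1) * Qp P n i j - pZ P n (i + (j:Fin n)+1) s * Qp P n i (j-1)

variable {P n}

theorem qq_eq_Qp (i : Fin n) (k : ℕ) (hk : k ≤ n) :
    qq P n i (i + (k : Fin n)) = Qp P n i k := by
  unfold qq Qp
  have hb : (i + (k:Fin n)) - i = (k : Fin n) := by ring
  rw [hb]
  rcases lt_or_eq_of_le hk with h | h
  · rw [Fin.val_cast_of_lt h]
  · subst h
    rw [Fin.natCast_self, Fin.val_zero]
    simp [pN_zero]

theorem Qp_rec (i : Fin n) (m : ℕ) (hm : m + 2 ≤ n) :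
    Qp P n i (m+2) = X (i + ((m+1:ℕ) : Fin n)) * Qp P n i (m+1) - Qp P n i m := by
  unfold Qp
  have e1 : pN P n (i+1) (m+2)
      = X (i + ((m+1:ℕ):Fin n)) * pN P n (i+1) (m+1) - pN P n (i+1) m := by
    rw [pN_rec, show (i+1) + ((m:ℕ):Fin n) = i + ((m+1:ℕ):Fin n) from by push_cast; ring]
  set j0 : Fin n := i + ((m:ℕ):Fin n) + 1 with hj0
  have e2 := pN_rec' (P := P) (n := n) (i := j0) (s := n - m - 2)
  rw [show n-m-2+2 = n-m from by omega, show n-m-2+1 = n-(m+1) from by omega,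
    show n-m-2 = n-(m+2) from by omega] at e2
  have hA : i + ((m+1:ℕ):Fin n) + 1 = j0 + 1 := by rw [hj0]; push_cast; ring
  have hB : i + ((m+2:ℕ):Fin n) + 1 = j0 + 1 + 1 := by rw [hj0]; push_cast; ring
  have hX : j0 = i + ((m+1:ℕ):Fin n) := by rw [hj0]; push_cast; ring
  rw [e1, hA, hB, ← hX]
  linear_combination e2

theorem C2_zero (i : Fin n) (j : ℕ) : C2 P n i j 0 := by
  unfold C2
  rw [show ((j:ℤ) + 0).toNat = j from by omega, zero_add, pZ_one, pZ_zero]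
  ring

theorem C2_negone (i : Fin n) (j : ℕ) (hj : 1 ≤ j) : C2 P n i j (-1) := by
  unfold C2
  rw [show ((j:ℤ) + -1).toNat = j - 1 from by omega,
    show (-1 : ℤ) + 1 = 0 from by ring, pZ_zero,
    show (-1 : ℤ) = -((1:ℕ) : ℤ) from by norm_num, pZ_neg, pN_one]
  ring

theorem threeF (i : Fin n) (j : ℕ) (s : ℤ) :
    pZ P n (i + (j:Fin n)) ((s+1)+1) * Qp P n i j
        - pZ P n (i + (j:Fin n)+1) (s+1) * Qp P n i (j-1)
      = X (i + (j:Fin n) + (s : Fin n)) *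
          (pZ P n (i + (j:Fin n)) (s+1) * Qp P n i j
            - pZ P n (i + (j:Fin n)+1) s * Qp P n i (j-1))
        - (pZ P n (i + (j:Fin n)) ((s-1)+1) * Qp P n i j
            - pZ P n (i + (j:Fin n)+1) (s-1) * Qp P n i (j-1)) := by
  have a := pZ_rec (P := P) (n := n) (i + (j:Fin n)) s
  have b := pZ_rec (P := P) (n := n) (i + (j:Fin n) + 1) (s-1)
  rw [show s-1+2 = s+1 from by ring, show s-1+1 = s from by ring] at b
  rw [show (i + (j:Fin n) + 1) + ((s-1 : ℤ) : Fin n) = i + (j:Fin n) + ((s:ℤ) : Fin n) from by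
    push_cast; ring] at b
  rw [show s+1+1 = s+2 from by ring, a, b]
  ring

theorem threeG (i : Fin n) (j : ℕ) (s : ℤ) (hlo : 1 ≤ (j:ℤ)+s) (hhi : (j:ℤ)+s ≤ (n:ℤ)-1) :
    Qp P n i (((j:ℤ)+(s+1)).toNat)
      = X (i + (j:Fin n) + (s : Fin n)) * Qp P n i (((j:ℤ)+s).toNat)
        - Qp P n i (((j:ℤ)+(s-1)).toNat) := by
  obtain ⟨m, hm⟩ : ∃ m : ℕ, ((j:ℤ)+s).toNat = m+1 := ⟨((j:ℤ)+s).toNat - 1, by omega⟩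
  rw [hm, show ((j:ℤ)+(s+1)).toNat = m+2 from by omega,
    show ((j:ℤ)+(s-1)).toNat = m from by omega]
  have hmn : m + 2 ≤ n := by omega
  rw [Qp_rec i m hmn]
  have hz : ((m+1:ℕ) : ℤ) = (j:ℤ) + s := by omega
  have hc : ((m+1:ℕ) : Fin n) = (j:Fin n) + ((s:ℤ) : Fin n) := by
    calc ((m+1:ℕ) : Fin n) = (((m+1:ℕ) : ℤ) : Fin n) := by push_cast; ring
    _ = (((j:ℤ) + s : ℤ) : Fin n) := by rw [hz]
    _ = (j:Fin n) + ((s:ℤ) : Fin n) := by push_cast; ring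
  rw [hc, add_assoc]

theorem C2_up (i : Fin n) (j : ℕ) (s : ℤ) (hlo : 1 ≤ (j:ℤ)+s) (hhi : (j:ℤ)+s ≤ (n:ℤ)-1)
    (h1 : C2 P n i j s) (h2 : C2 P n i j (s-1)) : C2 P n i j (s+1) := by
  unfold C2 at *
  rw [threeG (P := P) (n := n) i j s hlo hhi, h1, h2, threeF (P := P) (n := n)]

theorem C2_down (i : Fin n) (j : ℕ) (s : ℤ) (hlo : 1 ≤ (j:ℤ)+s) (hhi : (j:ℤ)+s ≤ (n:ℤ)-1)
    (h1 : C2 P n i j s) (h2 : C2 P n i j (s+1)) : C2 P n i j (s-1) := by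
  unfold C2 at *
  have g := threeG (P := P) (n := n) i j s hlo hhi
  rw [h1, h2, threeF (P := P) (n := n)] at g
  linear_combination g

theorem C2_all (i : Fin n) (j : ℕ) (h2 : 2 ≤ j) (hjn : j ≤ n-1) (hn3 : 3 ≤ n) :
    ∀ s : ℤ, -(j:ℤ) ≤ s → s ≤ (n:ℤ)-j → C2 P n i j s := by
  have hj' : (j:ℤ) ≤ (n:ℤ)-1 := by omega
  have up : ∀ m : ℕ, (m:ℤ) ≤ (n:ℤ)-(j:ℤ) → C2 P n i j ((m:ℤ)-1) ∧ C2 P n i j (m:ℤ) := by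
    intro m
    induction m with
    | zero =>
        intro _
        constructor
        · have h := C2_negone (P := P) (n := n) i j (by omega)
          rwa [show (-1 : ℤ) = ((0:ℕ):ℤ)-1 from by norm_num] at h
        · have h := C2_zero (P := P) (n := n) i j
          rwa [show (0 : ℤ) = ((0:ℕ):ℤ) from by norm_num] at h
    | succ m ih =>
        intro hm
        have prev := ih (by push_cast at hm ⊢; omega)
        constructor
        · rw [show ((m+1:ℕ):ℤ)-1 = (m:ℤ) from by push_cast; ring]
          exact prev.2
        · rw [show ((m+1:ℕ):ℤ) = (m:ℤ)+1 from by push_cast; ring]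
          exact C2_up i j (m:ℤ) (by omega) (by push_cast at hm; omega) prev.2 prev.1
  have down : ∀ m : ℕ, (m:ℤ)+1 ≤ (j:ℤ) → C2 P n i j (-(m:ℤ)-1) ∧ C2 P n i j (-(m:ℤ)) := by
    intro m
    induction m with
    | zero =>
        intro _
        constructor
        · have h := C2_negone (P := P) (n := n) i j (by omega)
          rwa [show (-1 : ℤ) = -((0:ℕ):ℤ)-1 from by norm_num] at h
        · have h := C2_zero (P := P) (n := n) i j
          rwa [show (0 : ℤ) = -((0:ℕ):ℤ) from by norm_num] at h
    | succ m ih =>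
        intro hm
        have prev := ih (by push_cast at hm ⊢; omega)
        constructor
        · rw [show -((m+1:ℕ):ℤ)-1 = (-(m:ℤ)-1)-1 from by push_cast; ring]
          apply C2_down i j (-(m:ℤ)-1) (by push_cast at hm; omega) (by omega) prev.1
          rw [show -(m:ℤ)-1+1 = -(m:ℤ) from by ring]
          exact prev.2
        · rw [show -((m+1:ℕ):ℤ) = -(m:ℤ)-1 from by push_cast; ring]
          exact prev.1
  intro s hs1 hs2
  rcases le_or_gt 0 s with h | h
  · have hh := (up s.toNat (by omega)).2
    rwa [Int.toNat_of_nonneg h] at hh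
  · set m : ℕ := (-s).toNat with hmdef
    have hms : -(m:ℤ) = s := by omega
    rcases le_or_gt ((m:ℤ)+1) (j:ℤ) with hc | hc
    · have hh := (down m hc).2
      rwa [hms] at hh
    · -- m = j
      have hm1 : 1 ≤ m := by omega
      have hh := (down (m-1) (by omega)).1
      rwa [show -((m-1:ℕ):ℤ)-1 = s from by omega] at hh
end CycAux

open MvPolynomial Matrix
namespace CycAux

theorem det_updateCol_single {R : Type*} [CommRing R] {k : ℕ}
    (M : Matrix (Fin (k+1)) (Fin (k+1)) R) (r j : Fin (k+1)) (b : R) :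
    (M.updateCol j (Pi.single r b)).det
      = (-1)^((r:ℕ)+(j:ℕ)) * b * (M.submatrix r.succAbove j.succAbove).det := by
  rw [Matrix.det_succ_column _ j, Finset.sum_eq_single r]
  · have h1 : (M.updateCol j (Pi.single r b)) r j = b := by
      rw [Matrix.updateCol_self, Pi.single_eq_same]
    have h2 : (M.updateCol j (Pi.single r b)).submatrix r.succAbove j.succAbove
        = M.submatrix r.succAbove j.succAbove := by
      ext a b'
      simp only [Matrix.submatrix_apply]
      rw [Matrix.updateCol_apply, if_neg (Fin.succAbove_ne j b')]
    rw [h1, h2]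
  · intro r' _ hr'
    have : (M.updateCol j (Pi.single r b)) r' j = 0 := by
      rw [Matrix.updateCol_self, Pi.single_eq_of_ne hr']
    rw [this]
    ring
  · intro h
    exact absurd (Finset.mem_univ _) h

theorem det_eq_or_neg {R' : Type*} [CommRing R'] {m nn : ℕ} (M : Matrix (Fin nn) (Fin nn) R')
    (f g f' g' : Fin m → Fin nn) (hf : Function.Injective f) (hg : Function.Injective g)
    (hf' : Function.Injective f') (hg' : Function.Injective g')
    (hrf : Set.range f = Set.range f') (hrg : Set.range g = Set.range g') :
    (M.submatrix f' g').det = (M.submatrix f g).det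
      ∨ (M.submatrix f' g').det = -(M.submatrix f g).det := by
  classical
  let e : Equiv.Perm (Fin m) :=
    (Equiv.ofInjective f' hf').trans ((Equiv.setCongr hrf.symm).trans (Equiv.ofInjective f hf).symm)
  let e2 : Equiv.Perm (Fin m) :=
    (Equiv.ofInjective g' hg').trans ((Equiv.setCongr hrg.symm).trans (Equiv.ofInjective g hg).symm)
  have hfe : ∀ x, f (e x) = f' x := by
    intro x
    simp only [e, Equiv.trans_apply, Equiv.setCongr_apply]
    rw [Equiv.apply_ofInjective_symm hf]
    simp [Equiv.ofInjective_apply]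
  have hge : ∀ x, g (e2 x) = g' x := by
    intro x
    simp only [e2, Equiv.trans_apply, Equiv.setCongr_apply]
    rw [Equiv.apply_ofInjective_symm hg]
    simp [Equiv.ofInjective_apply]
  have key : M.submatrix f' g' = ((M.submatrix f g).submatrix e id).submatrix id e2 := by
    ext a b
    simp [hfe, hge]
  rw [key, Matrix.det_permute', Matrix.det_permute]
  rcases Int.units_eq_one_or (Equiv.Perm.sign e2) with h2 | h2 <;>
    rcases Int.units_eq_one_or (Equiv.Perm.sign e) with h1 | h1 <;>
      rw [h1, h2] <;> simp
end CycAux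

open MvPolynomial Matrix
namespace CycAux
variable {P : Type} [CommRing P] {n : ℕ} [NeZero n]

theorem Ent_shift (i : Fin n) (c x y : ℕ) :
    Ent P n i (x+c) (y+c) = Ent P n (i + (c : Fin n)) x y := by
  unfold Ent
  by_cases h : x = y
  · subst h
    rw [if_pos rfl, if_pos rfl]
    congr 1
    push_cast
    ring
  · rw [if_neg (by omega), if_neg h]
    by_cases h2 : x + 1 = y ∨ y + 1 = x
    · rw [if_pos (by omega), if_pos h2]
    · rw [if_neg (by omega), if_neg h2]

theorem add_cast_eq_self (b : Fin n) (z : ℕ) (hz : z ≤ n) :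
    b + (z : Fin n) = b ↔ (z = 0 ∨ z = n) := by
  constructor
  · intro h
    have h2 : (z : Fin n) = 0 := by
      have := congrArg (fun w => w - b) h
      simpa [add_comm, add_sub_cancel_right] using this
    rcases lt_or_eq_of_le hz with h3 | h3
    · left
      have := congrArg Fin.val h2
      rwa [Fin.val_cast_of_lt h3, Fin.val_zero] at this
    · right; exact h3
  · rintro (rfl | rfl)
    · simp
    · rw [Fin.natCast_self, add_zero]

theorem LCn_ent (a : Fin n) (x y : ℕ) (hx : x < n-1) (hy : y < n-1) :
    LCn P n (a + 1 + (x : Fin n)) (a + 1 + (y : Fin n)) = Ent P n (a+1) x y := by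
  have hn1 : 1 ≤ n := Nat.pos_of_ne_zero (NeZero.ne n)
  have hEq : (a + 1 + (x : Fin n) = a + 1 + (y : Fin n)) ↔ x = y := by
    constructor
    · intro h
      have h2 : (x : Fin n) = (y : Fin n) := add_left_cancel h
      have := congrArg Fin.val h2
      rwa [Fin.val_cast_of_lt (by omega), Fin.val_cast_of_lt (by omega)] at this
    · rintro rfl; rfl
  have hS1 : (a + 1 + (y : Fin n) = a + 1 + (x : Fin n) + 1) ↔ y = x + 1 := by
    constructor
    · intro h
      rw [add_assoc (a+1)] at h
      have h2 : (y : Fin n) = (x : Fin n) + 1 := add_left_cancel h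
      have h3 : (y : Fin n) = ((x+1 : ℕ) : Fin n) := by rw [h2]; push_cast; ring
      have := congrArg Fin.val h3
      rwa [Fin.val_cast_of_lt (by omega), Fin.val_cast_of_lt (by omega)] at this
    · rintro rfl; push_cast; ring
  have hS2 : (a + 1 + (x : Fin n) = a + 1 + (y : Fin n) + 1) ↔ x = y + 1 := by
    constructor
    · intro h
      rw [add_assoc (a+1)] at h
      have h2 : (x : Fin n) = (y : Fin n) + 1 := add_left_cancel h
      have h3 : (x : Fin n) = ((y+1 : ℕ) : Fin n) := by rw [h2]; push_cast; ring
      have := congrArg Fin.val h3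
      rwa [Fin.val_cast_of_lt (by omega), Fin.val_cast_of_lt (by omega)] at this
    · rintro rfl; push_cast; ring
  show (if _ = _ then _ else _) = _
  unfold Ent
  by_cases h : x = y
  · subst h
    rw [if_pos rfl, if_pos rfl]
  · rw [if_neg (fun hc => h (hEq.mp hc)), if_neg h]
    by_cases h2 : x + 1 = y
    · rw [if_pos (Or.inl (hS1.mpr h2.symm)), if_pos (Or.inl h2)]
    · by_cases h3 : y + 1 = x
      · rw [if_pos (Or.inr (hS2.mpr h3.symm)), if_pos (Or.inr h3)]
      · rw [if_neg ?_, if_neg (by tauto)]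
        rintro (hc | hc)
        · exact h2 (hS1.mp hc).symm
        · exact h3 (hS2.mp hc).symm

theorem LCn_colA (hn3 : 3 ≤ n) (a : Fin n) (x : ℕ) (hx : x < n-1) :
    LCn P n (a + 1 + (x : Fin n)) a
      = (if x = 0 then (-1 : MvPolynomial (Fin n) P) else 0)
        + (if x = n-2 then (-1 : MvPolynomial (Fin n) P) else 0) := by
  have c1 : (a + 1 + (x : Fin n) = a) ↔ False := by
    rw [show a + 1 + (x : Fin n) = a + ((x+1 : ℕ) : Fin n) from by push_cast; ring,
      add_cast_eq_self a (x+1) (by omega)]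
    constructor
    · rintro (h | h) <;> omega
    · exact False.elim
  have c2 : (a = a + 1 + (x : Fin n) + 1) ↔ x = n - 2 := by
    rw [show a + 1 + (x : Fin n) + 1 = a + ((x+2 : ℕ) : Fin n) from by push_cast; ring,
      eq_comm, add_cast_eq_self a (x+2) (by omega)]
    constructor
    · rintro (h | h) <;> omega
    · intro h; exact Or.inr (by omega)
  have c3 : (a + 1 + (x : Fin n) = a + 1) ↔ x = 0 := by
    constructor
    · intro h
      have h2 : (x : Fin n) = 0 := by
        have := congrArg (fun w => w - (a+1)) h
        simpa [add_comm, add_sub_cancel_right] using this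
      have := congrArg Fin.val h2
      rwa [Fin.val_cast_of_lt (by omega), Fin.val_zero] at this
    · rintro rfl; simp
  show (if _ = _ then _ else _) = _
  by_cases h : x = 0
  · rw [if_neg (fun hc => c1.mp hc), if_pos (Or.inr (c3.mpr h)), if_pos h,
      if_neg (by omega)]
    ring
  · by_cases h2 : x = n - 2
    · rw [if_neg (fun hc => c1.mp hc), if_pos (Or.inl (c2.mpr h2)), if_neg h, if_pos h2]
      ring
    · rw [if_neg (fun hc => c1.mp hc), if_neg ?_, if_neg h, if_neg h2]
      · ring
      · rintro (hc | hc)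
        · exact h2 (c2.mp hc)
        · exact h (c3.mp hc)
end CycAux

open MvPolynomial Matrix
namespace CycAux
variable {P : Type} [CommRing P] {n : ℕ} [NeZero n]

theorem detN (hn3 : 3 ≤ n) (a : Fin n) (d : ℕ) (hd1 : 1 ≤ d) (hd2 : d ≤ n - 1) :
    ((LCn P n).submatrix
        (fun k : Fin (n-1) => a + 1 + ((k : ℕ) : Fin n))
        (fun l : Fin (n-1) => if (l : ℕ) + 1 = d then a else a + 1 + ((l : ℕ) : Fin n))).det
      = -(pN P n (a+1) d + pN P n (a + (d : Fin n) + 1) (n - d)) := by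
  obtain ⟨c, rfl⟩ : ∃ c, n = c + 3 := ⟨n - 3, by omega⟩
  have hd2' : d ≤ c + 2 := by omega
  set N : Matrix (Fin (c+2)) (Fin (c+2)) (MvPolynomial (Fin (c+3)) P) :=
    (LCn P (c+3)).submatrix
      (fun k : Fin (c+2) => a + 1 + ((k : ℕ) : Fin (c+3)))
      (fun l : Fin (c+2) => if (l : ℕ) + 1 = d then a else a + 1 + ((l : ℕ) : Fin (c+3)))
    with hN
  show N.det = -(pN P (c+3) (a+1) d + pN P (c+3) (a + (d : Fin (c+3)) + 1) (c+3-d))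
  have hNent : ∀ (k l : Fin (c+2)), (l : ℕ) + 1 ≠ d →
      N k l = Ent P (c+3) (a+1) (k : ℕ) (l : ℕ) := by
    intro k l h
    rw [hN]
    simp only [Matrix.submatrix_apply]
    rw [if_neg h]
    exact LCn_ent a k l (by omega) (by omega)
  set t : Fin (c+2) := ⟨d-1, by omega⟩ with ht
  have htv : (t : ℕ) = d - 1 := rfl
  have hsplit : N = N.updateCol t
      (Pi.single (0 : Fin (c+2)) (-1) + Pi.single (Fin.last (c+1)) (-1)) := by
    refine Matrix.ext fun k l => ?_
    rw [Matrix.updateCol_apply]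
    by_cases h : l = t
    · rw [if_pos h, h]
      rw [hN]
      simp only [Matrix.submatrix_apply]
      rw [if_pos (show (t : ℕ) + 1 = d by rw [htv]; omega)]
      rw [LCn_colA (by omega) a k (by omega)]
      rw [Pi.add_apply, Pi.single_apply, Pi.single_apply]
      have h1 : ((k:ℕ) = 0) = (k = (0 : Fin (c+2))) := by
        rw [eq_iff_iff]
        exact ⟨fun h => Fin.ext h, fun h => by rw [h]; rfl⟩
      have h2 : ((k:ℕ) = c+3-2) = (k = Fin.last (c+1)) := by
        rw [eq_iff_iff, Fin.ext_iff, Fin.val_last]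
        omega
      simp only [h1, h2]
    · rw [if_neg h]
  have hDsum : N.det = (N.updateCol t (Pi.single (0:Fin (c+2)) (-1))).det
      + (N.updateCol t (Pi.single (Fin.last (c+1)) (-1))).det := by
    conv_lhs => rw [hsplit]
    rw [Matrix.det_updateCol_add]
  -- column map values
  have hσ : ∀ y : Fin (c+1),
      ((t.succAbove y : Fin (c+2)) : ℕ) = if (y:ℕ) < d-1 then (y:ℕ) else (y:ℕ)+1 := by
    intro y
    by_cases h : (y:ℕ) < d-1
    · rw [Fin.succAbove_of_castSucc_lt _ _ (by rw [Fin.lt_def]; simpa using h), if_pos h]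
      simp
    · rw [Fin.succAbove_of_le_castSucc _ _ (by rw [Fin.le_def]; simp [htv]; omega),
        if_neg h]
      simp
  have hσne : ∀ y : Fin (c+1), ((t.succAbove y : Fin (c+2)) : ℕ) + 1 ≠ d := by
    intro y hc
    apply Fin.succAbove_ne t y
    apply Fin.ext
    rw [htv]
    omega
  -- the block equivalence
  have hcard : (d-1) + (c+2-d) = c+1 := by omega
  set e : Fin (d-1) ⊕ Fin (c+2-d) ≃ Fin (c+1) := finSumFinEquiv.trans (finCongr hcard)
    with he
  have heL : ∀ p : Fin (d-1), ((e (Sum.inl p) : Fin (c+1)) : ℕ) = (p : ℕ) := by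
    intro p; simp [he]
  have heR : ∀ q : Fin (c+2-d), ((e (Sum.inr q) : Fin (c+1)) : ℕ) = (d-1) + (q : ℕ) := by
    intro q; simp [he]
  -- first minor (rows shifted by one)
  have hB1 : ∀ x y : Fin (c+1), N (Fin.succAbove 0 x) (t.succAbove y)
      = Ent P (c+3) (a+1) ((x:ℕ)+1) (if (y:ℕ) < d-1 then (y:ℕ) else (y:ℕ)+1) := by
    intro x y
    rw [Fin.succAbove_zero, hNent _ _ (hσne y), Fin.val_succ, hσ y]
  have hM1 : (N.submatrix (Fin.succAbove 0) t.succAbove).det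
      = (-1)^(d-1) * cpathDet P (c+3) (a + (d : Fin (c+3)) + 1) (c+2-d) := by
    rw [← Matrix.det_submatrix_equiv_self e]
    have hblocks : ((N.submatrix (Fin.succAbove 0) t.succAbove).submatrix e e)
        = Matrix.fromBlocks
            (Matrix.of fun p q : Fin (d-1) => Ent P (c+3) (a+1) ((p:ℕ)+1) (q:ℕ))
            (Matrix.of fun (p : Fin (d-1)) (q : Fin (c+2-d)) =>
              Ent P (c+3) (a+1) ((p:ℕ)+1) (d+(q:ℕ)))
            0
            (pmat P (c+3) (a + (d : Fin (c+3)) + 1) (c+2-d)) := by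
      refine Matrix.ext fun x y => ?_
      cases x with
      | inl xp =>
          cases y with
          | inl yp =>
              simp only [Matrix.submatrix_apply, Matrix.fromBlocks_apply₁₁, Matrix.of_apply]
              rw [hB1, heL, heL, if_pos (by omega : ((yp:ℕ) < d-1))]
          | inr yq =>
              simp only [Matrix.submatrix_apply, Matrix.fromBlocks_apply₁₂, Matrix.of_apply]
              rw [hB1, heL, heR, if_neg (by omega), show (d-1) + (yq:ℕ) + 1 = d + (yq:ℕ)
                from by omega]
      | inr xq =>
          cases y with
          | inl yp =>
              simp only [Matrix.submatrix_apply, Matrix.fromBlocks_apply₂₁, Matrix.zero_apply]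
              rw [hB1, heR, heL, if_pos (by omega : ((yp:ℕ) < d-1))]
              exact Ent_zero _ _ _ (by omega) (by omega) (by omega)
          | inr yq =>
              simp only [Matrix.submatrix_apply, Matrix.fromBlocks_apply₂₂]
              rw [hB1, heR, heR, if_neg (by omega),
                show (d-1) + (xq:ℕ) + 1 = (xq:ℕ) + d from by omega,
                show (d-1) + (yq:ℕ) + 1 = (yq:ℕ) + d from by omega,
                Ent_shift, pmat_apply]
              congr 1
              ring
    rw [hblocks, Matrix.det_fromBlocks_zero₂₁]
    have hT : (Matrix.of fun p q : Fin (d-1) =>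
        Ent P (c+3) (a+1) ((p:ℕ)+1) (q:ℕ)).det = (-1)^(d-1) := by
      rw [Matrix.det_of_upperTriangular]
      · have hdiag : ∀ p : Fin (d-1), (Matrix.of fun p q : Fin (d-1) =>
            Ent P (c+3) (a+1) ((p:ℕ)+1) (q:ℕ)) p p = -1 := by
          intro p
          simp only [Matrix.of_apply]
          exact Ent_lo _ _ _ rfl
        rw [Finset.prod_congr rfl (fun p _ => hdiag p), Finset.prod_const,
          Finset.card_univ, Fintype.card_fin]
      · intro p q hqp
        simp only [Matrix.of_apply]
        have : (q : ℕ) < (p : ℕ) := hqp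
        exact Ent_zero _ _ _ (by omega) (by omega) (by omega)
    rw [hT, ← cpathDet_eq]
  -- second minor (rows castSucc)
  have hB2 : ∀ x y : Fin (c+1), N ((Fin.last (c+1)).succAbove x) (t.succAbove y)
      = Ent P (c+3) (a+1) (x:ℕ) (if (y:ℕ) < d-1 then (y:ℕ) else (y:ℕ)+1) := by
    intro x y
    rw [Fin.succAbove_last, hNent _ _ (hσne y), Fin.coe_castSucc, hσ y]
  have hM2 : (N.submatrix (Fin.last (c+1)).succAbove t.succAbove).det
      = cpathDet P (c+3) (a+1) (d-1) * (-1)^(c+2-d) := by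
    rw [← Matrix.det_submatrix_equiv_self e]
    have hblocks : ((N.submatrix (Fin.last (c+1)).succAbove t.succAbove).submatrix e e)
        = Matrix.fromBlocks
            (pmat P (c+3) (a+1) (d-1))
            0
            (Matrix.of fun (p : Fin (c+2-d)) (q : Fin (d-1)) =>
              Ent P (c+3) (a+1) ((d-1)+(p:ℕ)) (q:ℕ))
            (Matrix.of fun (p q : Fin (c+2-d)) =>
              Ent P (c+3) (a+1) ((d-1)+(p:ℕ)) (d+(q:ℕ))) := by
      refine Matrix.ext fun x y => ?_
      cases x with
      | inl xp =>
          cases y with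
          | inl yp =>
              simp only [Matrix.submatrix_apply, Matrix.fromBlocks_apply₁₁, pmat_apply]
              rw [hB2, heL, heL, if_pos (by omega : ((yp:ℕ) < d-1))]
          | inr yq =>
              simp only [Matrix.submatrix_apply, Matrix.fromBlocks_apply₁₂, Matrix.zero_apply]
              rw [hB2, heL, heR, if_neg (by omega),
                show (d-1) + (yq:ℕ) + 1 = d + (yq:ℕ) from by omega]
              exact Ent_zero _ _ _ (by omega) (by omega) (by omega)
      | inr xq =>
          cases y with
          | inl yp =>
              simp only [Matrix.submatrix_apply, Matrix.fromBlocks_apply₂₁, Matrix.of_apply]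
              rw [hB2, heR, heL, if_pos (by omega : ((yp:ℕ) < d-1))]
          | inr yq =>
              simp only [Matrix.submatrix_apply, Matrix.fromBlocks_apply₂₂, Matrix.of_apply]
              rw [hB2, heR, heR, if_neg (by omega),
                show (d-1) + (yq:ℕ) + 1 = d + (yq:ℕ) from by omega]
    rw [hblocks, Matrix.det_fromBlocks_zero₁₂]
    have hT : (Matrix.of fun (p q : Fin (c+2-d)) =>
        Ent P (c+3) (a+1) ((d-1)+(p:ℕ)) (d+(q:ℕ))).det = (-1)^(c+2-d) := by
      rw [Matrix.det_of_lowerTriangular]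
      · have hdiag : ∀ p : Fin (c+2-d), (Matrix.of fun (p q : Fin (c+2-d)) =>
            Ent P (c+3) (a+1) ((d-1)+(p:ℕ)) (d+(q:ℕ))) p p = -1 := by
          intro p
          simp only [Matrix.of_apply]
          exact Ent_hi _ _ _ (by omega)
        rw [Finset.prod_congr rfl (fun p _ => hdiag p), Finset.prod_const,
          Finset.card_univ, Fintype.card_fin]
      · intro p q hqp
        simp only [Matrix.of_apply]
        have : (q : ℕ) > (p : ℕ) := hqp
        exact Ent_zero _ _ _ (by omega) (by omega) (by omega)
    rw [hT, ← cpathDet_eq]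
  -- assemble
  rw [hDsum, det_updateCol_single N 0 t (-1), det_updateCol_single N (Fin.last (c+1)) t (-1),
    hM1, hM2]
  rw [show ((0 : Fin (c+2)) : ℕ) = 0 from rfl, Fin.val_last, htv]
  have hp1 : pN P (c+3) (a+1) d = cpathDet P (c+3) (a+1) (d-1) := by
    rw [pN, if_neg (by omega)]
  have hp2 : pN P (c+3) (a + (d : Fin (c+3)) + 1) (c+3-d)
      = cpathDet P (c+3) (a + (d : Fin (c+3)) + 1) (c+2-d) := by
    rw [pN, if_neg (by omega), show c+3-d-1 = c+2-d from by omega]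
  rw [hp1, hp2, show (0 : ℕ) + (d-1) = d-1 from by omega]
  have h11 : ((-1 : MvPolynomial (Fin (c+3)) P)^(d-1)) * ((-1 : MvPolynomial (Fin (c+3)) P)^(d-1))
      = 1 := by
    rw [← pow_add]
    exact Even.neg_one_pow ⟨d-1, rfl⟩
  have h22 : ((-1 : MvPolynomial (Fin (c+3)) P)^(c+1+(d-1)))
      * ((-1 : MvPolynomial (Fin (c+3)) P)^(c+2-d)) = 1 := by
    rw [← pow_add, show c+1+(d-1)+(c+2-d) = (c+1)+(c+1) from by omega]
    exact Even.neg_one_pow ⟨c+1, rfl⟩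
  linear_combination (-(cpathDet P (c+3) (a + (d : Fin (c+3)) + 1) (c+2-d))) * h11
    + (-(cpathDet P (c+3) (a+1) (d-1))) * h22
end CycAux

open MvPolynomial Matrix
namespace CycAux
variable {P : Type} [CommRing P] {n : ℕ} [NeZero n]

theorem rmap_inj (hn3 : 3 ≤ n) (a : Fin n) :
    Function.Injective (fun k : Fin (n-1) => a + 1 + ((k : ℕ) : Fin n)) := by
  intro k l h
  simp only at h
  have h2 : ((k:ℕ) : Fin n) = ((l:ℕ) : Fin n) := add_left_cancel h
  have := congrArg Fin.val h2
  rw [Fin.val_cast_of_lt (by omega), Fin.val_cast_of_lt (by omega)] at this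
  exact Fin.ext this

theorem rmap_mem (hn3 : 3 ≤ n) (a : Fin n) (k : Fin (n-1)) :
    a + 1 + ((k : ℕ) : Fin n) ≠ a := by
  intro h
  rw [show a + 1 + ((k:ℕ) : Fin n) = a + (((k:ℕ)+1 : ℕ) : Fin n) from by push_cast; ring] at h
  rcases (add_cast_eq_self a ((k:ℕ)+1) (by omega)).mp h with h2 | h2 <;> omega

theorem rmap_surj (hn3 : 3 ≤ n) (a x : Fin n) (hx : x ≠ a) :
    ∃ k : Fin (n-1), a + 1 + ((k : ℕ) : Fin n) = x := by
  set z := (x - (a+1)) with hz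
  have hxz : x = a + 1 + ((z.val : ℕ) : Fin n) := by
    rw [Fin.cast_val_eq_self, hz]; ring
  have hzlt : (z : ℕ) < n - 1 := by
    rcases lt_or_ge (z:ℕ) (n-1) with h | h
    · exact h
    · exfalso
      have hzn : (z:ℕ) = n - 1 := by omega
      apply hx
      rw [hxz, hzn, show a + 1 + ((n-1 : ℕ) : Fin n) = a + ((n : ℕ) : Fin n) from by
        push_cast [show ((n-1:ℕ) : Fin n) = ((n:ℕ) : Fin n) - 1 from by push_cast [Nat.cast_sub (by omega : 1 ≤ n)]; ring]; ring,
        Fin.natCast_self, add_zero]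
  exact ⟨⟨z, hzlt⟩, hxz.symm⟩

theorem rmap_range (hn3 : 3 ≤ n) (a : Fin n) :
    Set.range (fun k : Fin (n-1) => a + 1 + ((k : ℕ) : Fin n)) = ↑(Finset.univ.erase a) := by
  ext x
  simp only [Set.mem_range, Finset.coe_erase, Set.mem_diff, Finset.coe_univ, Set.mem_univ,
    true_and, Set.mem_singleton_iff]
  constructor
  · rintro ⟨k, rfl⟩
    exact rmap_mem hn3 a k
  · intro hx
    exact rmap_surj hn3 a x hx

theorem cmap_inj (hn3 : 3 ≤ n) (a : Fin n) (d : ℕ) (hd1 : 1 ≤ d) (hd2 : d ≤ n-1) :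
    Function.Injective
      (fun l : Fin (n-1) => if (l : ℕ) + 1 = d then a else a + 1 + ((l : ℕ) : Fin n)) := by
  intro k l h
  simp only at h
  by_cases h1 : (k:ℕ) + 1 = d <;> by_cases h2 : (l:ℕ) + 1 = d
  · exact Fin.ext (by omega)
  · rw [if_pos h1, if_neg h2] at h
    exact absurd h.symm (rmap_mem hn3 a l)
  · rw [if_neg h1, if_pos h2] at h
    exact absurd h (rmap_mem hn3 a k)
  · rw [if_neg h1, if_neg h2] at h
    exact rmap_inj hn3 a h
theorem cmap_range (hn3 : 3 ≤ n) (a : Fin n) (d : ℕ) (hd1 : 1 ≤ d) (hd2 : d ≤ n-1) :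
    Set.range (fun l : Fin (n-1) => if (l : ℕ) + 1 = d then a else a + 1 + ((l : ℕ) : Fin n))
      = ↑(Finset.univ.erase (a + (d : Fin n))) := by
  have hne : ∀ l : Fin (n-1), (l:ℕ) + 1 ≠ d → a + 1 + ((l:ℕ) : Fin n) ≠ a + (d : Fin n) := by
    intro l hl hc
    rw [show a + 1 + ((l:ℕ) : Fin n) = a + (((l:ℕ)+1 : ℕ) : Fin n) from by push_cast; ring] at hc
    have h2 : (((l:ℕ)+1 : ℕ) : Fin n) = (d : Fin n) := add_left_cancel hc
    have := congrArg Fin.val h2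
    rw [Fin.val_cast_of_lt (by omega), Fin.val_cast_of_lt (by omega)] at this
    omega
  have haa : a ≠ a + (d : Fin n) := by
    intro hc
    rcases (add_cast_eq_self a d (by omega)).mp hc.symm with h2 | h2 <;> omega
  ext x
  simp only [Set.mem_range, Finset.coe_erase, Set.mem_diff, Finset.coe_univ, Set.mem_univ,
    true_and, Set.mem_singleton_iff]
  constructor
  · rintro ⟨l, rfl⟩
    by_cases h1 : (l:ℕ) + 1 = d
    · rw [if_pos h1]; exact haa
    · rw [if_neg h1]; exact hne l h1
  · intro hx
    by_cases h1 : x = a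
    · refine ⟨⟨d-1, by omega⟩, ?_⟩
      rw [if_pos (by simp; omega)]
      exact h1.symm
    · obtain ⟨k, hk⟩ := rmap_surj hn3 a x h1
      refine ⟨k, ?_⟩
      rw [if_neg ?_]
      · exact hk
      · intro hc
        apply hx
        rw [← hk, show a + 1 + ((k:ℕ) : Fin n) = a + (((k:ℕ)+1 : ℕ) : Fin n) from by
          push_cast; ring, hc]

theorem detN0 (hn3 : 3 ≤ n) (a : Fin n) :
    ((LCn P n).submatrix
        (fun k : Fin (n-1) => a + 1 + ((k : ℕ) : Fin n))
        (fun l : Fin (n-1) => a + 1 + ((l : ℕ) : Fin n))).det = pN P n (a+1) n := by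
  have hmat : ((LCn P n).submatrix
      (fun k : Fin (n-1) => a + 1 + ((k : ℕ) : Fin n))
      (fun l : Fin (n-1) => a + 1 + ((l : ℕ) : Fin n))) = pmat P n (a+1) (n-1) := by
    refine Matrix.ext fun k l => ?_
    simp only [Matrix.submatrix_apply]
    rw [LCn_ent a k l (by omega) (by omega), pmat_apply]
  rw [hmat, ← cpathDet_eq, pN, if_neg (by omega)]

theorem part1 (hn3 : 3 ≤ n) (a b : Fin n) :
    cminor P n a b = qq P n a b ∨ cminor P n a b = - qq P n a b := by
  set d : ℕ := ((b - a : Fin n)).val with hd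
  have hdlt : d < n := (b - a).isLt
  have hb : b = a + (d : Fin n) := by
    rw [hd, Fin.cast_val_eq_self]; ring
  have hqq : qq P n a b = pN P n (a+1) d + pN P n (b+1) (n - d) := rfl
  by_cases hd0 : d = 0
  · -- a = b
    have hba : b = a := by rw [hb, hd0]; simp
    subst hba
    have hq : qq P n b b = pN P n (b+1) n := by
      rw [hqq, hd0, pN_zero, Nat.sub_zero, zero_add]
    rcases det_eq_or_neg (LCn P n)
        (fun k : Fin (n-1) => b + 1 + ((k : ℕ) : Fin n))
        (fun l : Fin (n-1) => b + 1 + ((l : ℕ) : Fin n))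
        (⇑((Finset.univ.erase b).orderEmbOfFin (k := n - 1) (by simp)))
        (⇑((Finset.univ.erase b).orderEmbOfFin (k := n - 1) (by simp)))
        (rmap_inj hn3 b) (rmap_inj hn3 b)
        (((Finset.univ.erase b).orderEmbOfFin (k := n - 1) (by simp)).injective)
        (((Finset.univ.erase b).orderEmbOfFin (k := n - 1) (by simp)).injective)
        ((rmap_range hn3 b).trans (Finset.range_orderEmbOfFin _ _).symm)
        ((rmap_range hn3 b).trans (Finset.range_orderEmbOfFin _ _).symm) with h | h
    · left
      rw [cminor, h, detN0 hn3 b, hq]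
    · right
      rw [cminor, h, detN0 hn3 b, hq]
  · -- d ≥ 1
    have hd1 : 1 ≤ d := by omega
    have hd2 : d ≤ n - 1 := by omega
    have hq : qq P n a b = -(-(pN P n (a+1) d + pN P n (a + (d : Fin n) + 1) (n - d))) := by
      rw [hqq, hb]; ring
    rcases det_eq_or_neg (LCn P n)
        (fun k : Fin (n-1) => a + 1 + ((k : ℕ) : Fin n))
        (fun l : Fin (n-1) => if (l : ℕ) + 1 = d then a else a + 1 + ((l : ℕ) : Fin n))
        (⇑((Finset.univ.erase a).orderEmbOfFin (k := n - 1) (by simp)))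
        (⇑((Finset.univ.erase b).orderEmbOfFin (k := n - 1) (by simp)))
        (rmap_inj hn3 a) (cmap_inj hn3 a d hd1 hd2)
        (((Finset.univ.erase a).orderEmbOfFin (k := n - 1) (by simp)).injective)
        (((Finset.univ.erase b).orderEmbOfFin (k := n - 1) (by simp)).injective)
        ((rmap_range hn3 a).trans (Finset.range_orderEmbOfFin _ _).symm)
        (((cmap_range hn3 a d hd1 hd2).trans (by rw [← hb])).trans
          (Finset.range_orderEmbOfFin _ _).symm) with h | h
    · right
      rw [cminor, h, detN hn3 a d hd1 hd2, hq]
      try ring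
    · left
      rw [cminor, h, detN hn3 a d hd1 hd2, hq]
      try ring
end CycAux

open MvPolynomial Matrix
namespace CycAux
variable {P : Type} [CommRing P] {n : ℕ} [NeZero n]

theorem part2 (hn3 : 3 ≤ n) (i : Fin n) (j : ℕ) (s : ℤ) (h2 : 2 ≤ j) (hj : j ≤ n - 1)
    (hs1 : -(j:ℤ) ≤ s) (hs2 : s ≤ (n:ℤ) - (j:ℤ)) :
    qq P n i (i + (j : Fin n) + (s : Fin n))
      = pZ P n (i + (j : Fin n)) (s + 1) * qq P n i (i + (j : Fin n))
        - pZ P n (i + (j : Fin n) + 1) s * qq P n i (i + (j : Fin n) - 1) := by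
  have hC := C2_all (P := P) (n := n) i j h2 hj hn3 s hs1 hs2
  unfold C2 at hC
  have e1 : qq P n i (i + (j : Fin n) + (s : Fin n)) = Qp P n i (((j:ℤ)+s).toNat) := by
    have hz : ((((j:ℤ)+s).toNat : ℕ) : ℤ) = (j:ℤ) + s := by omega
    have hcast : (j : Fin n) + ((s:ℤ) : Fin n) = ((((j:ℤ)+s).toNat : ℕ) : Fin n) := by
      calc (j : Fin n) + ((s:ℤ) : Fin n) = (((j:ℤ) + s : ℤ) : Fin n) := by push_cast; ring
      _ = ((((j:ℤ)+s).toNat : ℕ) : Fin n) := by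
        rw [show ((((j:ℤ)+s).toNat : ℕ) : Fin n)
            = (((((j:ℤ)+s).toNat : ℕ) : ℤ) : Fin n) from by push_cast; ring, hz]
    rw [add_assoc, hcast, qq_eq_Qp i _ (by omega)]
  have e2 : qq P n i (i + (j : Fin n)) = Qp P n i j := qq_eq_Qp i j (by omega)
  have e3 : qq P n i (i + (j : Fin n) - 1) = Qp P n i (j-1) := by
    have hc : ((j-1:ℕ) : Fin n) = (j : Fin n) - 1 := by
      have hz : ((j-1:ℕ) : ℤ) = (j:ℤ) - 1 := by omega
      calc ((j-1:ℕ):Fin n) = (((j-1:ℕ):ℤ) : Fin n) := by push_cast; ring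
      _ = (((j:ℤ)-1 : ℤ) : Fin n) := by rw [hz]
      _ = (j:Fin n) - 1 := by push_cast; ring
    rw [show i + (j:Fin n) - 1 = i + ((j-1:ℕ) : Fin n) from by rw [hc]; ring,
      qq_eq_Qp i (j-1) (by omega)]
  rw [e1, e2, e3]
  exact hC
end CycAux


/-- For the cycle `C_n` (`n ≥ 3`): every `(n-1)`-minor `q_{i,j}` of `L(C_n,X)` satisfies
`±q_{i,j} = p_{i+1,j-i} + p_{j+1,n-j+i}`, and the recurrence
`q_{i,i+j+s} = p_{i+j,s+1}·q_{i,i+j} − p_{i+j+1,s}·q_{i,i+j-1}` holds for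
`2 ≤ j ≤ n−1` and `−j ≤ s ≤ n−j`. -/
theorem cycle_minor_identities (P : Type) [CommRing P] (n : ℕ) [NeZero n] (hn : 3 ≤ n) :
    (∀ i j : ℕ, 1 ≤ i → i ≤ j → j ≤ n →
      cminor P n (i : Fin n) (j : Fin n) = qq P n (i : Fin n) (j : Fin n) ∨
      cminor P n (i : Fin n) (j : Fin n) = - qq P n (i : Fin n) (j : Fin n)) ∧
    (∀ (i : Fin n) (j : ℕ) (s : ℤ), 2 ≤ j → j ≤ n - 1 →
      -(j : ℤ) ≤ s → s ≤ (n : ℤ) - (j : ℤ) →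
      qq P n i (i + (j : Fin n) + (s : Fin n))
        = pZ P n (i + (j : Fin n)) (s + 1) * qq P n i (i + (j : Fin n))
          - pZ P n (i + (j : Fin n) + 1) s * qq P n i (i + (j : Fin n) - 1)) := by
  
  constructor
  · intro i j _ _ _
    exact CycAux.part1 hn _ _
  · intro i j s h2 hj hs1 hs2
    exact CycAux.part2 hn i j s h2 hj hs1 hs2
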